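/- arXiv:2010.03685 — 4 statements merged into one kernel-verified Lean document; each statement's English description precedes it below -/
import Mathlib

section
/- Let φ : ℂ × ℂ → GL_n(ℂ) satisfy φ(μ+λ, z) = φ(μ, e^λ z)φ(λ, z) and φ(0,z) = I, let M(z) = φ(2πi, z), and suppose the unipotent part M_u(z) of M(z) defines a function M_u : ℂ → GL_n(ℂ) (automatically satisfying M_u(e^λ z) = φ(λ,z) M_u(z) φ(λ,z)^{-1}). Then σ(λ, z) := exp( −(λ / 2πi) · log M_u(e^λ z) ) satisfies the groupoid 1-cocycle identity σ(μ, e^λ z) · φ(μ, e^λ z) · σ(λ, z) · φ(μ, e^λ z)^{-1} = σ(μ + λ, z) for all μ, λ, z ∈ ℂ. -/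
open Matrix

abbrev Mat (n : ℕ) := Matrix (Fin n) (Fin n) ℂ

/-- `S` is diagonalizable over `ℂ`. -/
def IsDiagonalizable {n : ℕ} (S : Mat n) : Prop :=
  ∃ (P : Mat n) (d : Fin n → ℂ), IsUnit P ∧ S = P * Matrix.diagonal d * P⁻¹

/-- The (finite) logarithm series of a unipotent matrix. -/
noncomputable def unipLog {n : ℕ} (U : Mat n) : Mat n :=
  ∑ k ∈ Finset.Icc 1 n, ((-1 : ℂ) ^ (k + 1) / (k : ℂ)) • (U - 1) ^ k

/-- The untwisting cocycle `σ(λ, z) = exp(−(λ/2πi) log M_u(e^λ z))`. -/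
noncomputable def untwist {n : ℕ} (Mu : ℂ → Mat n) (l z : ℂ) : Mat n :=
  NormedSpace.exp
    ((-(l / (2 * Real.pi * Complex.I))) • unipLog (Mu (Complex.exp l * z)))

lemma unipLog_conj {n : ℕ} (P U : Mat n) (hP : IsUnit P) :
    unipLog (P * U * P⁻¹) = P * unipLog U * P⁻¹ := by
  obtain ⟨u, rfl⟩ := hP
  rw [← Matrix.coe_units_inv]
  have hsub : (↑u : Mat n) * U * ↑u⁻¹ - 1 = ↑u * (U - 1) * ↑u⁻¹ := by
    rw [mul_sub, sub_mul, mul_one, Units.mul_inv]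
  unfold unipLog
  rw [hsub, Finset.mul_sum, Finset.sum_mul]
  refine Finset.sum_congr rfl fun k _ => ?_
  rw [Units.conj_pow, mul_smul_comm, smul_mul_assoc]

/-- The untwisting cocycle built from the unipotent part of the monodromy of a
representation of `ℂ ⋉ 𝔸` satisfies the groupoid 1-cocycle identity. -/
theorem untwisting_cocycle {n : ℕ} (φ : ℂ → ℂ → Mat n) (Mu : ℂ → Mat n)
    (hcoc : ∀ μ l z : ℂ, φ (μ + l) z = φ μ (Complex.exp l * z) * φ l z)
    (hid : ∀ z : ℂ, φ 0 z = 1)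
    (hunip : ∀ z : ℂ, (Mu z - 1) ^ n = 0)
    (hJC : ∀ z : ℂ, ∃ Ms : Mat n, IsDiagonalizable Ms ∧ IsUnit Ms ∧
      Commute Ms (Mu z) ∧ φ (2 * Real.pi * Complex.I) z = Ms * Mu z)
    (hequiv : ∀ l z : ℂ, Mu (Complex.exp l * z) = φ l z * Mu z * (φ l z)⁻¹) :
    ∀ μ l z : ℂ,
      untwist Mu μ (Complex.exp l * z) * φ μ (Complex.exp l * z) * untwist Mu l z *
          (φ μ (Complex.exp l * z))⁻¹ =
        untwist Mu (μ + l) z := by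
  have hUnit : ∀ (l z : ℂ), IsUnit (φ l z) := by
    intro l z
    have h := hcoc (-l) l z
    rw [neg_add_cancel, hid] at h
    exact (Matrix.isUnit_iff_isUnit_det _).mpr (Matrix.isUnit_det_of_left_inverse h.symm)
  intro μ l z
  have hupE : Complex.exp μ * (Complex.exp l * z) = Complex.exp (μ + l) * z := by
    rw [Complex.exp_add, mul_assoc]
  have hφ := hUnit μ (Complex.exp l * z)
  set c : ℂ := 2 * Real.pi * Complex.I with hc
  set P := φ μ (Complex.exp l * z) with hP
  set L := unipLog (Mu (Complex.exp (μ + l) * z)) with hLdef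
  have hL : L = P * unipLog (Mu (Complex.exp l * z)) * P⁻¹ := by
    rw [hLdef, ← hupE, hequiv μ (Complex.exp l * z), unipLog_conj _ _ hφ]
  have hmid : P * NormedSpace.exp ((-(l / c)) • unipLog (Mu (Complex.exp l * z))) * P⁻¹
      = NormedSpace.exp ((-(l / c)) • L) := by
    have h1 : (-(l / c)) • L
        = P * ((-(l / c)) • unipLog (Mu (Complex.exp l * z))) * P⁻¹ := by
      rw [hL]; simp only [smul_mul_assoc, mul_smul_comm]
    rw [h1, Matrix.exp_conj P _ hφ]
  have hcomm : Commute ((-(μ / c)) • L) ((-(l / c)) • L) :=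
    ((Commute.refl L).smul_left _).smul_right _
  have hs : (-(μ / c)) + (-(l / c)) = -((μ + l) / c) := by ring
  unfold untwist
  rw [hupE]
  rw [mul_assoc, mul_assoc, ← mul_assoc P, hmid,
    ← Matrix.exp_add_of_commute _ _ hcomm, ← add_smul, hs]
end

section
/- Let S ∈ M_n(ℂ) and let N_0, N_1, …, N_m ∈ M_n(ℂ) be matrices with [S, N_i] = i·N_i for each i. Define A(z) = S + Σ_{i=0}^{m} z^i N_i and, on the slit plane ℂ minus the negative real axis, s(z) = exp(log(z)·S) · exp(log(z)·(Σ_{i=0}^m N_i)) using the principal logarithm. Then s is a fundamental solution of the Fuchsian equation z·s'(z) = A(z)·s(z) on the slit plane. -/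
open Matrix

attribute [local instance]
  Matrix.linftyOpNormedAddCommGroup Matrix.linftyOpNormedRing
  Matrix.linftyOpNormedSpace Matrix.linftyOpNormedAlgebra

open NormedSpace in
/-- If `A * B = B * C` then `exp A * B = B * exp C`. -/
lemma exp_mul_comm_aux {n : ℕ} (A B C : Mat n) (h : A * B = B * C) :
    NormedSpace.exp A * B = B * NormedSpace.exp C := by
  have hk : ∀ k : ℕ, A ^ k * B = B * C ^ k := by
    intro k
    induction k with
    | zero => simp
    | succ k ih =>
      rw [pow_succ, pow_succ, mul_assoc, h, ← mul_assoc, ih, mul_assoc]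
  have hA : Summable fun k : ℕ => ((Nat.factorial k : ℂ))⁻¹ • A ^ k :=
    NormedSpace.expSeries_summable' (𝕂 := ℂ) A
  have hC : Summable fun k : ℕ => ((Nat.factorial k : ℂ))⁻¹ • C ^ k :=
    NormedSpace.expSeries_summable' (𝕂 := ℂ) C
  rw [NormedSpace.exp_eq_tsum ℂ]
  beta_reduce
  rw [← hA.tsum_mul_right B, ← hC.tsum_mul_left B]
  congr 1
  funext k
  rw [smul_mul_assoc, hk k, mul_smul_comm]

open NormedSpace in
/-- Conjugation of an eigenvector of `ad S` by `exp (t • S)`. -/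
lemma exp_smul_conj {n : ℕ} (S B : Mat n) (c t : ℂ)
    (h : S * B - B * S = c • B) :
    NormedSpace.exp (t • S) * B = Complex.exp (t * c) • (B * NormedSpace.exp (t • S)) := by
  have h' : (t • S) * B = B * (t • S + (t * c) • 1) := by
    have : S * B = B * S + c • B := by rw [← h]; noncomm_ring
    rw [smul_mul_assoc, this]
    simp [mul_add, mul_smul_comm, smul_add, smul_smul]
  rw [exp_mul_comm_aux _ _ _ h']
  have hcomm : Commute (t • S) ((t * c) • (1 : Mat n)) := by
    apply Commute.smul_left
    apply Commute.smul_right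
    exact (Commute.one_right S)
  rw [add_comm] at *
  have : NormedSpace.exp ((t * c) • (1 : Mat n) + t • S)
      = NormedSpace.exp ((t * c) • (1 : Mat n)) * NormedSpace.exp (t • S) :=
    NormedSpace.exp_add_of_commute hcomm.symm
  rw [this]
  have hone : NormedSpace.exp ((t * c) • (1 : Mat n)) = Complex.exp (t * c) • 1 := by
    have := NormedSpace.map_exp (algebraMap ℂ (Mat n)) (continuous_algebraMap ℂ (Mat n)) (t * c)
    rw [Complex.exp_eq_exp_ℂ]
    have h2 := this.symm
    simp [Algebra.algebraMap_eq_smul_one] at h2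
    exact h2
  rw [hone]
  simp [mul_smul_comm, smul_mul_assoc, mul_assoc]

/-- A connection 1-form in Levelt normal form `A(z) = S + Σ_{i=0}^m z^i N_i`, with
`[S, N_i] = i N_i`, has the explicit fundamental solution
`s(z) = z^S z^{N'} = exp(log z · S) exp(log z · Σ N_i)` on the slit plane:
`z · s'(z) = A(z) · s(z)`. -/
theorem levelt_fundamental_solution {n m : ℕ} (S : Mat n) (N : ℕ → Mat n)
    (hres : ∀ i : ℕ, i ≤ m → S * N i - N i * S = (i : ℂ) • N i) :
    ∀ z ∈ Complex.slitPlane,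
      HasDerivAt
        (fun w : ℂ =>
          NormedSpace.exp (Complex.log w • S) *
            NormedSpace.exp (Complex.log w • ∑ i ∈ Finset.range (m + 1), N i))
        (z⁻¹ •
          ((S + ∑ i ∈ Finset.range (m + 1), z ^ i • N i) *
            (NormedSpace.exp (Complex.log z • S) *
              NormedSpace.exp (Complex.log z • ∑ i ∈ Finset.range (m + 1), N i))))
        z := by
  intro z hz
  have hz0 : z ≠ 0 := Complex.slitPlane_ne_zero hz
  set N' : Mat n := ∑ i ∈ Finset.range (m + 1), N i with hN'
  have hlog : HasDerivAt Complex.log z⁻¹ z := Complex.hasDerivAt_log hz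
  -- derivative of each exponential factor
  have hS : HasDerivAt (fun w : ℂ => NormedSpace.exp (Complex.log w • S))
      (z⁻¹ • (S * NormedSpace.exp (Complex.log z • S))) z := by
    have := (hasDerivAt_exp_smul_const' (𝕂 := ℂ) S (Complex.log z)).scomp z hlog
    exact this
  have hN : HasDerivAt (fun w : ℂ => NormedSpace.exp (Complex.log w • N'))
      (z⁻¹ • (N' * NormedSpace.exp (Complex.log z • N'))) z := by
    have := (hasDerivAt_exp_smul_const' (𝕂 := ℂ) N' (Complex.log z)).scomp z hlog
    exact this
  have hmul := hS.mul hN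
  convert hmul using 1
  case e'_4 => rfl
  case e'_5 => rfl
  case e'_6 => rfl
  case e'_8 => rfl
  -- algebraic identity
  set ES := NormedSpace.exp (Complex.log z • S)
  set EN := NormedSpace.exp (Complex.log z • N')
  have key : (∑ i ∈ Finset.range (m + 1), z ^ i • N i) * ES = ES * N' := by
    rw [hN', Finset.mul_sum, Finset.sum_mul]
    apply Finset.sum_congr rfl
    intro i hi
    have hi' : i ≤ m := Nat.lt_succ_iff.mp (Finset.mem_range.mp hi)
    have := exp_smul_conj S (N i) (i : ℂ) (Complex.log z) (hres i hi')
    rw [this]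
    have hzi : Complex.exp (Complex.log z * (i : ℂ)) = z ^ i := by
      rw [mul_comm, Complex.exp_nat_mul, Complex.exp_log hz0]
    rw [hzi, smul_mul_assoc]
  have key2 : (∑ i ∈ Finset.range (m + 1), z ^ i • N i) * (ES * EN) = ES * (N' * EN) := by
    rw [← mul_assoc, key, mul_assoc]
  rw [add_mul, smul_add, key2]
  simp [smul_mul_assoc, mul_smul_comm, mul_assoc]
end

section
/- Let M : ℂ → GL_n(ℂ) be continuous and suppose that for every z ≠ 0 the matrix M(z) is conjugate to M(1). Then M(0) lies in the closure of the conjugacy class of M(1); in particular, the semisimple parts of M(0) and M(1) are conjugate, and if M(1) is semisimple (diagonalizable) then M(0) is conjugate to M(1). -/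
open Matrix

open Polynomial in
lemma eval_charpoly' {n : ℕ} (A : Mat n) (t : ℂ) :
    A.charpoly.eval t = (t • (1 : Mat n) - A).det := by
  rw [Matrix.charpoly, eval_det, matPolyEquiv_charmatrix, eval_sub, eval_X, eval_C]
  congr 1
  ext i j
  rcases eq_or_ne i j with rfl | hij
  · simp [Matrix.scalar_apply]
  · simp [Matrix.scalar_apply, Matrix.one_apply_ne hij, Matrix.diagonal_apply_ne _ hij]

lemma conj_sub_smul {n : ℕ} {g : Mat n} (hg : IsUnit g) (t : ℂ) (A : Mat n) :
    g * (t • (1 : Mat n) - A) * g⁻¹ = t • (1 : Mat n) - g * A * g⁻¹ := by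
  have hd : IsUnit g.det := (Matrix.isUnit_iff_isUnit_det g).mp hg
  have h1 : g * g⁻¹ = 1 := Matrix.mul_nonsing_inv _ hd
  rw [Matrix.mul_sub, Matrix.sub_mul, mul_smul_comm, smul_mul_assoc, mul_one, h1]

lemma charpoly_conj' {n : ℕ} {g : Mat n} (hg : IsUnit g) (A : Mat n) :
    (g * A * g⁻¹).charpoly = A.charpoly := by
  apply Polynomial.funext
  intro t
  rw [eval_charpoly', eval_charpoly', ← conj_sub_smul hg, Matrix.det_conj hg]

open Polynomial in
lemma charpoly_nilpotent_mat {n : ℕ} {N : Mat n} (h : IsNilpotent N) :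
    N.charpoly = X ^ n := by
  have h2 : IsNilpotent (Matrix.toLinAlgEquiv' N) :=
    h.map (Matrix.toLinAlgEquiv' : Mat n ≃ₐ[ℂ] _)
  have h3 := LinearMap.charpoly_toMatrix (Matrix.toLinAlgEquiv' N) (Pi.basisFun ℂ (Fin n))
  rw [LinearMap.toMatrix_eq_toMatrix'] at h3
  have h4 : LinearMap.toMatrix' (Matrix.toLinAlgEquiv' N) = N :=
    LinearMap.toMatrixAlgEquiv'_toLinAlgEquiv' N
  rw [h4] at h3
  rw [h3, h2.charpoly_eq_X_pow_finrank]
  congr 1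
  simp [Module.finrank_pi]

lemma det_one_sub_nilpotent {n : ℕ} {N : Mat n} (h : IsNilpotent N) :
    (1 - N).det = 1 := by
  have h1 := eval_charpoly' N 1
  rw [charpoly_nilpotent_mat h] at h1
  simpa using h1.symm

open Polynomial in
lemma charpoly_add_nilpotent {n : ℕ} (A N : Mat n) (hc : Commute A N)
    (hn : IsNilpotent N) : (A + N).charpoly = A.charpoly := by
  apply Polynomial.eq_of_infinite_eval_eq
  have hne : A.charpoly ≠ 0 := (Matrix.charpoly_monic A).ne_zero
  have hfin : Set.Finite {t : ℂ | A.charpoly.IsRoot t} := Polynomial.finite_setOf_isRoot hne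
  apply Set.Infinite.mono _ hfin.infinite_compl
  intro t ht
  simp only [Set.mem_compl_iff, Set.mem_setOf_eq, Polynomial.IsRoot] at ht
  show (A + N).charpoly.eval t = A.charpoly.eval t
  set B : Mat n := t • (1 : Mat n) - A with hB
  have hdet : IsUnit B.det := by
    apply isUnit_iff_ne_zero.mpr
    rwa [← eval_charpoly']
  have hBu : IsUnit B := (Matrix.isUnit_iff_isUnit_det B).mpr hdet
  have hcomm : Commute B N := ((Commute.one_left N).smul_left t).sub_left hc
  have hinvc : Commute B⁻¹ N := by
    have h1 := hBu.unit_spec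
    have h2 : Commute (↑hBu.unit : Mat n) N := by rw [h1]; exact hcomm
    have h3 := h2.units_inv_left
    rwa [Matrix.coe_units_inv, h1] at h3
  have hnil : IsNilpotent (B⁻¹ * N) := hinvc.isNilpotent_mul_left hn
  have hmul : B * (1 - B⁻¹ * N) = t • (1 : Mat n) - (A + N) := by
    rw [Matrix.mul_sub, Matrix.mul_one, ← Matrix.mul_assoc, Matrix.mul_nonsing_inv _ hdet,
      Matrix.one_mul, hB, sub_sub]
  rw [eval_charpoly', eval_charpoly', ← hmul, Matrix.det_mul,
    det_one_sub_nilpotent hnil, mul_one]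

open Polynomial in
lemma charpoly_diagonal' {n : ℕ} (d : Fin n → ℂ) :
    (Matrix.diagonal d).charpoly = ∏ i, (X - C (d i)) := by
  rw [Matrix.charpoly]
  have h1 : charmatrix (Matrix.diagonal d)
      = Matrix.diagonal fun i => (X : ℂ[X]) - C (d i) := by
    ext i j
    rcases eq_or_ne i j with rfl | hij
    · simp
    · simp [charmatrix_apply_ne _ _ _ hij, Matrix.diagonal_apply_ne _ hij]
  rw [h1, Matrix.det_diagonal]

lemma exists_comp_perm {n : ℕ} (f g : Fin n → ℂ)
    (h : Multiset.map f Finset.univ.val = Multiset.map g Finset.univ.val) :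
    ∃ σ : Equiv.Perm (Fin n), f = g ∘ σ := by
  letI : LinearOrder ℂ := LinearOrder.lift' (fun z => toLex (z.re, z.im))
    (fun a b hab => Complex.ext (congrArg (fun p => (ofLex p).1) hab)
      (congrArg (fun p => (ofLex p).2) hab))
  have key : ∀ (u : Fin n → ℂ) (σ : Equiv.Perm (Fin n)),
      (↑(List.ofFn (u ∘ σ)) : Multiset ℂ) = Multiset.map u Finset.univ.val := by
    intro u σ
    have h1 : (↑(List.ofFn (u ∘ σ)) : Multiset ℂ)
        = Multiset.map (u ∘ σ) Finset.univ.val := by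
      rw [List.ofFn_eq_map]
      rfl
    rw [h1, ← Multiset.map_map, Multiset.map_univ_val_equiv]
  have h1 : List.ofFn (f ∘ Tuple.sort f) = List.ofFn (g ∘ Tuple.sort g) := by
    apply List.Perm.eq_of_sortedLE (Tuple.monotone_sort f).sortedLE_ofFn
      (Tuple.monotone_sort g).sortedLE_ofFn (Multiset.coe_eq_coe.mp (by rw [key, key, h]))
  have h2 : f ∘ Tuple.sort f = g ∘ Tuple.sort g := List.ofFn_injective h1
  refine ⟨(Tuple.sort f).symm.trans (Tuple.sort g), funext fun i => ?_⟩
  have h3 := congrFun h2 ((Tuple.sort f).symm i)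
  simpa using h3

lemma diagonal_conj_perm {n : ℕ} (g : Fin n → ℂ) (σ : Equiv.Perm (Fin n)) :
    ∃ P : Mat n, IsUnit P ∧ Matrix.diagonal (g ∘ σ) = P * Matrix.diagonal g * P⁻¹ := by
  classical
  set P : Mat n := (1 : Mat n).submatrix σ (⇑(Equiv.refl (Fin n))) with hP
  set Q : Mat n := (1 : Mat n).submatrix (⇑(Equiv.refl (Fin n))) σ with hQ
  have hPQ : P * Q = 1 := by
    rw [hP, hQ, Matrix.submatrix_mul_equiv (1 : Mat n) (1 : Mat n) σ (Equiv.refl (Fin n)) σ,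
      one_mul, Matrix.submatrix_one_equiv]
  have hQP : Q * P = 1 := by
    rw [hP, hQ, Matrix.submatrix_mul_equiv (1 : Mat n) (1 : Mat n)
      (⇑(Equiv.refl (Fin n))) σ (⇑(Equiv.refl (Fin n))), one_mul,
      Matrix.submatrix_one_equiv]
  have hPu : IsUnit P := ⟨⟨P, Q, hPQ, hQP⟩, rfl⟩
  have hPinv : P⁻¹ = Q := Matrix.inv_eq_right_inv hPQ
  refine ⟨P, hPu, ?_⟩
  rw [hPinv]
  have h1 : P * Matrix.diagonal g * Q
      = ((1 : Mat n) * Matrix.diagonal g * (1 : Mat n)).submatrix σ σ := by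
    rw [hP, hQ,
      ← Matrix.submatrix_mul_equiv ((1 : Mat n) * Matrix.diagonal g) (1 : Mat n)
        σ (Equiv.refl (Fin n)) σ,
      ← Matrix.submatrix_mul_equiv (1 : Mat n) (Matrix.diagonal g)
        σ (Equiv.refl (Fin n)) (⇑(Equiv.refl (Fin n)))]
    rfl
  rw [h1, one_mul, mul_one]
  ext i j
  rcases eq_or_ne i j with rfl | hij
  · simp
  · simp [Matrix.diagonal_apply_ne _ hij,
      Matrix.diagonal_apply_ne _ (fun hc => hij (σ.injective hc))]

lemma mat_conj_comp {n : ℕ} {A B C g h : Mat n} (_hg : IsUnit g) (_hh : IsUnit h)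
    (h1 : A = g * B * g⁻¹) (h2 : B = h * C * h⁻¹) :
    A = (g * h) * C * (g * h)⁻¹ := by
  rw [Matrix.mul_inv_rev, h1, h2]
  simp [Matrix.mul_assoc]

lemma mat_conj_inv {n : ℕ} {A B g : Mat n} (hg : IsUnit g) (h1 : A = g * B * g⁻¹) :
    B = g⁻¹ * A * (g⁻¹)⁻¹ := by
  have hd : IsUnit g.det := (Matrix.isUnit_iff_isUnit_det g).mp hg
  have h2 : g⁻¹ * g = 1 := Matrix.nonsing_inv_mul _ hd
  rw [Matrix.nonsing_inv_nonsing_inv _ hd, h1]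
  simp only [← Matrix.mul_assoc]
  rw [h2, Matrix.one_mul, Matrix.mul_assoc, h2, Matrix.mul_one]

open Polynomial in
lemma conj_of_diag_of_charpoly_eq {n : ℕ} {A B : Mat n}
    (hA : IsDiagonalizable A) (hB : IsDiagonalizable B) (h : A.charpoly = B.charpoly) :
    ∃ g : Mat n, IsUnit g ∧ A = g * B * g⁻¹ := by
  obtain ⟨P, d, hP, hPA⟩ := hA
  obtain ⟨Q, e, hQ, hQB⟩ := hB
  have hd : (Matrix.diagonal d).charpoly = (Matrix.diagonal e).charpoly := by
    have k1 : A.charpoly = (Matrix.diagonal d).charpoly := by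
      rw [hPA, charpoly_conj' hP]
    have k2 : B.charpoly = (Matrix.diagonal e).charpoly := by
      rw [hQB, charpoly_conj' hQ]
    rw [← k1, ← k2, h]
  have hms : Multiset.map d Finset.univ.val = Multiset.map e Finset.univ.val := by
    rw [charpoly_diagonal', charpoly_diagonal'] at hd
    have h2 : ((Multiset.map d Finset.univ.val).map fun a => X - C a).prod
        = ((Multiset.map e Finset.univ.val).map fun a => X - C a).prod := by
      rw [Multiset.map_map, Multiset.map_map]
      exact hd
    rw [← Polynomial.roots_multiset_prod_X_sub_C (Multiset.map d Finset.univ.val), h2,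
      Polynomial.roots_multiset_prod_X_sub_C]
  obtain ⟨σ, hσ⟩ := exists_comp_perm d e hms
  obtain ⟨R, hR, hRd⟩ := diagonal_conj_perm e σ
  have hQinv : IsUnit Q⁻¹ := Matrix.isUnit_nonsing_inv_iff.mpr hQ
  have hDe : Matrix.diagonal e = Q⁻¹ * B * (Q⁻¹)⁻¹ := mat_conj_inv hQ hQB
  have hDd : Matrix.diagonal d = (R * Q⁻¹) * B * (R * Q⁻¹)⁻¹ := by
    rw [hσ]
    exact mat_conj_comp hR hQinv hRd hDe
  refine ⟨P * (R * Q⁻¹), (hP.mul (hR.mul hQinv)), ?_⟩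
  exact mat_conj_comp hP (hR.mul hQinv) hPA hDd

lemma aeval_conj {n : ℕ} {g : Mat n} (hg : IsUnit g) (A : Mat n) (p : Polynomial ℂ) :
    Polynomial.aeval (g * A * g⁻¹) p = g * Polynomial.aeval A p * g⁻¹ := by
  have hd : IsUnit g.det := (Matrix.isUnit_iff_isUnit_det g).mp hg
  have h1 : g * g⁻¹ = 1 := Matrix.mul_nonsing_inv _ hd
  have h2 : g⁻¹ * g = 1 := Matrix.nonsing_inv_mul _ hd
  have hpow : ∀ k : ℕ, (g * A * g⁻¹) ^ k = g * A ^ k * g⁻¹ := by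
    intro k
    induction k with
    | zero => rw [pow_zero, pow_zero, Matrix.mul_one, h1]
    | succ k ih =>
        rw [pow_succ, ih, pow_succ]
        simp only [Matrix.mul_assoc]
        rw [← Matrix.mul_assoc g⁻¹ g (A * g⁻¹), h2, Matrix.one_mul]
  rw [Polynomial.aeval_eq_sum_range, Polynomial.aeval_eq_sum_range, Finset.mul_sum,
    Finset.sum_mul]
  apply Finset.sum_congr rfl
  intro i _
  rw [hpow, mul_smul_comm, smul_mul_assoc]

lemma isDiagonalizable_of_eigenbasis {n : ℕ} {A : Mat n}
    (b : Module.Basis (Fin n) ℂ (Fin n → ℂ)) (d : Fin n → ℂ)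
    (hb : ∀ i, A.mulVec (b i) = d i • b i) :
    IsDiagonalizable A := by
  classical
  set st : Module.Basis (Fin n) ℂ (Fin n → ℂ) := Pi.basisFun ℂ (Fin n) with hst
  have hkey : LinearMap.toMatrix b b (Matrix.toLin' A) = Matrix.diagonal d := by
    ext i j
    rw [LinearMap.toMatrix_apply, Matrix.toLin'_apply, hb j]
    rcases eq_or_ne i j with rfl | hij
    · simp
    · simp [Finsupp.single_apply, Matrix.diagonal_apply_ne _ hij, Ne.symm hij]
  have hA : LinearMap.toMatrix st st (Matrix.toLin' A) = A := by
    rw [hst, LinearMap.toMatrix_eq_toMatrix']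
    exact LinearMap.toMatrix'_toLin' A
  have hmain := basis_toMatrix_mul_linearMap_toMatrix_mul_basis_toMatrix
    (b := st) (b' := b) (c := st) (c' := b) (f := Matrix.toLin' A)
  rw [hkey, hA] at hmain
  have hPQ : st.toMatrix b * b.toMatrix st = 1 := Module.Basis.toMatrix_mul_toMatrix_flip st b
  have hQP : b.toMatrix st * st.toMatrix b = 1 := Module.Basis.toMatrix_mul_toMatrix_flip b st
  have hPu : IsUnit (st.toMatrix b) := ⟨⟨st.toMatrix b, b.toMatrix st, hPQ, hQP⟩, rfl⟩
  have hPinv : (st.toMatrix b)⁻¹ = b.toMatrix st := Matrix.inv_eq_right_inv hPQ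
  exact ⟨st.toMatrix b, d, hPu, by rw [hPinv, hmain]⟩

open Polynomial in
lemma isDiagonalizable_of_aeval_prod_eq_zero {n : ℕ} {A : Mat n} (s : Finset ℂ)
    (h : Polynomial.aeval A (∏ a ∈ s, (X - C a)) = 0) : IsDiagonalizable A := by
  classical
  set f : Module.End ℂ (Fin n → ℂ) := Matrix.toLinAlgEquiv' A with hf
  have hfz : Polynomial.aeval f (∏ a ∈ s, (X - C a)) = 0 := by
    have h1 : Polynomial.aeval ((Matrix.toLinAlgEquiv' : Mat n ≃ₐ[ℂ] _).toAlgHom A)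
        (∏ a ∈ s, (X - C a))
        = (Matrix.toLinAlgEquiv' : Mat n ≃ₐ[ℂ] _).toAlgHom
            (Polynomial.aeval A (∏ a ∈ s, (X - C a))) :=
      Polynomial.aeval_algHom_apply _ A _
    rw [h] at h1
    simpa [hf] using h1
  have hsq : Squarefree (∏ a ∈ s, (X - C a) : ℂ[X]) := by
    apply Polynomial.Separable.squarefree
    exact Polynomial.separable_prod_X_sub_C_iff'.mpr (fun a _ b _ hab => hab)
  have hss : f.IsSemisimple := Module.End.isSemisimple_of_squarefree_aeval_eq_zero hsq hfz
  have hfs := hss.isFinitelySemisimple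
  have htop : ⨆ μ : ℂ, f.maxGenEigenspace μ = ⊤ := Module.End.iSup_maxGenEigenspace_eq_top f
  have hind : iSupIndep f.maxGenEigenspace := f.independent_genEigenspace ⊤
  have hint : DirectSum.IsInternal f.maxGenEigenspace :=
    DirectSum.isInternal_submodule_of_iSupIndep_of_iSup_eq_top hind htop
  let bb : ∀ μ : ℂ, Module.Basis (Module.Free.ChooseBasisIndex ℂ (f.maxGenEigenspace μ)) ℂ
      (f.maxGenEigenspace μ) := fun μ => Module.Free.chooseBasis ℂ _
  let B := hint.collectedBasis bb
  letI : Fintype (Σ μ : ℂ, Module.Free.ChooseBasisIndex ℂ (f.maxGenEigenspace μ)) :=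
    FiniteDimensional.fintypeBasisIndex B
  have hcard : Fintype.card (Σ μ : ℂ, Module.Free.ChooseBasisIndex ℂ (f.maxGenEigenspace μ))
      = n := by
    rw [← Module.finrank_eq_card_basis B]
    simp [Module.finrank_pi]
  let e := Fintype.equivFinOfCardEq hcard
  let b' := B.reindex e
  apply isDiagonalizable_of_eigenbasis b' (fun i => (e.symm i).1)
  intro i
  have hmem := hint.collectedBasis_mem bb (e.symm i)
  rw [hfs.maxGenEigenspace_eq_eigenspace] at hmem
  have heig := Module.End.mem_eigenspace_iff.mp hmem
  have hb' : b' i = B (e.symm i) := B.reindex_apply e i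
  rw [hb']
  have hfv : f (B (e.symm i)) = A.mulVec (B (e.symm i)) := Matrix.toLinAlgEquiv'_apply A _
  rw [← hfv, heig]

/-- If `M : ℂ → GL_n(ℂ)` is continuous and `M(z)` is conjugate to `M(1)` for all
`z ≠ 0`, then `M(0)` lies in the closure of the conjugacy class of `M(1)`, the
semisimple parts of `M(0)` and `M(1)` are conjugate, and if `M(1)` is semisimple
then `M(0)` is conjugate to `M(1)`. -/
theorem monodromy_at_zero_in_closure {n : ℕ} (M : ℂ → Mat n)
    (hcont : Continuous M)
    (hconj : ∀ z : ℂ, z ≠ 0 → ∃ g : Mat n, IsUnit g ∧ M z = g * M 1 * g⁻¹) :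
    M 0 ∈ closure {X : Mat n | ∃ g : Mat n, IsUnit g ∧ X = g * M 1 * g⁻¹} ∧
    (∀ S₀ U₀ S₁ U₁ : Mat n,
      IsDiagonalizable S₀ → IsNilpotent (U₀ - 1) → Commute S₀ U₀ → M 0 = S₀ * U₀ →
      IsDiagonalizable S₁ → IsNilpotent (U₁ - 1) → Commute S₁ U₁ → M 1 = S₁ * U₁ →
      ∃ g : Mat n, IsUnit g ∧ S₀ = g * S₁ * g⁻¹) ∧
    (IsDiagonalizable (M 1) →
      ∃ g : Mat n, IsUnit g ∧ M 0 = g * M 1 * g⁻¹) := by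
  classical
  set S : Set (Mat n) := {X : Mat n | ∃ g : Mat n, IsUnit g ∧ X = g * M 1 * g⁻¹} with hS
  -- Part 1 : closure membership
  have hmem : M 0 ∈ closure S := by
    have h0 : Filter.Tendsto (fun k : ℕ => ((((k : ℝ) + 1)⁻¹ : ℝ) : ℂ)) Filter.atTop
        (nhds 0) := by
      have h1 : Filter.Tendsto (fun k : ℕ => ((k : ℝ) + 1)⁻¹) Filter.atTop (nhds 0) := by
        simpa [one_div] using tendsto_one_div_add_atTop_nhds_zero_nat (𝕜 := ℝ)
      have h2 := (Complex.continuous_ofReal.tendsto (0 : ℝ)).comp h1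
      simpa [Function.comp_def] using h2
    have hM : Filter.Tendsto (fun k : ℕ => M ((((k : ℝ) + 1)⁻¹ : ℝ) : ℂ)) Filter.atTop
        (nhds (M 0)) := (hcont.tendsto 0).comp h0
    apply mem_closure_of_tendsto hM
    apply Filter.Eventually.of_forall
    intro k
    have hne : ((((k : ℝ) + 1)⁻¹ : ℝ) : ℂ) ≠ 0 := by
      apply Complex.ofReal_ne_zero.mpr
      positivity
    exact hconj _ hne
  -- charpoly equality
  have hcp : (M 0).charpoly = (M 1).charpoly := by
    apply Polynomial.funext
    intro t
    rw [eval_charpoly', eval_charpoly']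
    have hclosed : IsClosed {X : Mat n |
        (t • (1 : Mat n) - X).det = (t • (1 : Mat n) - M 1).det} :=
      isClosed_eq ((continuous_const.sub continuous_id).matrix_det) continuous_const
    have hsub : S ⊆ {X : Mat n |
        (t • (1 : Mat n) - X).det = (t • (1 : Mat n) - M 1).det} := by
      rintro X ⟨g, hg, rfl⟩
      show (t • (1 : Mat n) - g * M 1 * g⁻¹).det = _
      rw [← conj_sub_smul hg, Matrix.det_conj hg]
    exact closure_minimal hsub hclosed hmem
  refine ⟨hmem, ?_, ?_⟩
  · -- Part 2
    intro S₀ U₀ S₁ U₁ hS₀ hU₀ hc₀ hM₀ hS₁ hU₁ hc₁ hM₁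
    have key : ∀ (T U : Mat n), IsNilpotent (U - 1) → Commute T U →
        (T * U).charpoly = T.charpoly := by
      intro T U hU hc
      have h1 : T * U = T + T * (U - 1) := by
        rw [Matrix.mul_sub, Matrix.mul_one, add_sub_cancel]
      rw [h1]
      apply charpoly_add_nilpotent
      · exact (Commute.refl T).mul_right (hc.sub_right (Commute.one_right T))
      · exact (hc.sub_right (Commute.one_right T)).isNilpotent_mul_left hU
    have k₀ : (M 0).charpoly = S₀.charpoly := by rw [hM₀, key S₀ U₀ hU₀ hc₀]
    have k₁ : (M 1).charpoly = S₁.charpoly := by rw [hM₁, key S₁ U₁ hU₁ hc₁]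
    exact conj_of_diag_of_charpoly_eq hS₀ hS₁ (by rw [← k₀, ← k₁, hcp])
  · -- Part 3
    intro hD
    obtain ⟨P, d, hP, hPd⟩ := hD
    set s : Finset ℂ := Finset.image d Finset.univ with hs
    set p : Polynomial ℂ := ∏ a ∈ s, (Polynomial.X - Polynomial.C a) with hp
    have hdz : Polynomial.aeval d p = 0 := by
      funext i
      have h1 := Polynomial.aeval_algHom_apply
        (Pi.evalAlgHom ℂ (fun _ : Fin n => ℂ) i) d p
      simp only [Pi.evalAlgHom_apply] at h1
      have h2 : Polynomial.aeval (d i) p = 0 := by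
        rw [hp, map_prod]
        apply Finset.prod_eq_zero (Finset.mem_image_of_mem d (Finset.mem_univ i))
        simp
      rw [← h1, h2]
      rfl
    have hdiagz : Polynomial.aeval (Matrix.diagonal d) p = 0 := by
      have h1 := Polynomial.aeval_algHom_apply
        (Matrix.diagonalAlgHom ℂ : (Fin n → ℂ) →ₐ[ℂ] Mat n) d p
      simp only [Matrix.diagonalAlgHom_apply] at h1
      rw [h1, hdz]
      ext i j
      simp [Matrix.diagonal]
    have hA1 : Polynomial.aeval (M 1) p = 0 := by
      rw [hPd, aeval_conj hP, hdiagz]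
      simp
    have hA0 : Polynomial.aeval (M 0) p = 0 := by
      have hc : Continuous fun X : Mat n => Polynomial.aeval X p := by
        have h1 : (fun X : Mat n => Polynomial.aeval X p) = fun X : Mat n =>
            ∑ i ∈ Finset.range (p.natDegree + 1), p.coeff i • X ^ i :=
          funext fun X => Polynomial.aeval_eq_sum_range X
        rw [h1]
        exact continuous_finset_sum _ fun i _ =>
          (show Continuous fun X : Mat n => p.coeff i • X ^ i by
            fun_prop)
      have hclosed : IsClosed {X : Mat n | Polynomial.aeval X p = 0} :=
        isClosed_eq hc continuous_const
      have hsub : S ⊆ {X : Mat n | Polynomial.aeval X p = 0} := by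
        rintro X ⟨g, hg, rfl⟩
        show Polynomial.aeval (g * M 1 * g⁻¹) p = 0
        rw [aeval_conj hg, hA1]
        simp
      exact closure_minimal hsub hclosed hmem
    have hdiag0 : IsDiagonalizable (M 0) := isDiagonalizable_of_aeval_prod_eq_zero s hA0
    exact conj_of_diag_of_charpoly_eq hdiag0 ⟨P, d, hP, hPd⟩ hcp
end

section
/- Let M : ℂ → GL_n(ℂ) be holomorphic and suppose all the matrices M(z) for z ≠ 0 are pairwise conjugate. Then the functions z ↦ M_s(z) and z ↦ M_u(z), assigning to z the semisimple and unipotent parts of M(z), are holomorphic on all of ℂ; indeed there is a single polynomial p ∈ ℂ[X] with p(0)=0 such that M_s(z) = p(M(z)) for every z ∈ ℂ, including z = 0. -/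
open Matrix Polynomial

attribute [local instance]
  Matrix.linftyOpNormedAddCommGroup Matrix.linftyOpNormedRing
  Matrix.linftyOpNormedSpace Matrix.linftyOpNormedAlgebra

namespace JCAux

variable {n : ℕ}

lemma commute_aeval (A : Mat n) (r s : Polynomial ℂ) :
    Commute (aeval A r) (aeval A s) := by
  unfold Commute SemiconjBy
  rw [← _root_.map_mul, ← _root_.map_mul, mul_comm]

lemma conj_pow {g A : Mat n} (h1 : g⁻¹ * g = 1) (h2 : g * g⁻¹ = 1) (k : ℕ) :
    (g * A * g⁻¹) ^ k = g * A ^ k * g⁻¹ := by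
  induction k with
  | zero => simp only [pow_zero, Matrix.mul_one, h2]
  | succ k ih =>
      rw [pow_succ, ih, pow_succ]
      calc g * A ^ k * g⁻¹ * (g * A * g⁻¹) = g * A ^ k * (g⁻¹ * g) * A * g⁻¹ := by
            simp only [Matrix.mul_assoc]
        _ = g * (A ^ k * A) * g⁻¹ := by rw [h1]; simp only [Matrix.mul_assoc, Matrix.mul_one]
        _ = g * (A ^ k * A) * g⁻¹ := rfl

lemma aeval_conj {g : Mat n} (A : Mat n) (hg : IsUnit g) (r : Polynomial ℂ) :
    aeval (g * A * g⁻¹) r = g * aeval A r * g⁻¹ := by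
  have hg' := (Matrix.isUnit_iff_isUnit_det g).mp hg
  have h1 : g⁻¹ * g = 1 := Matrix.nonsing_inv_mul g hg'
  have h2 : g * g⁻¹ = 1 := Matrix.mul_nonsing_inv g hg'
  induction r using Polynomial.induction_on' with
  | add p q hp hq => rw [map_add, map_add, hp, hq, Matrix.mul_add, Matrix.add_mul]
  | monomial k a =>
      rw [aeval_monomial, aeval_monomial, conj_pow h1 h2,
        ← Algebra.smul_def a (g * A ^ k * g⁻¹), ← Algebra.smul_def a (A ^ k),
        Matrix.mul_smul, Matrix.smul_mul]

lemma eq_zero_at_zero_of_continuous {f : ℂ → Mat n} (hf : Continuous f)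
    (h : ∀ z : ℂ, z ≠ 0 → f z = 0) : f 0 = 0 := by
  have h1 : Filter.Tendsto f (nhdsWithin 0 {(0:ℂ)}ᶜ) (nhds (f 0)) :=
    (hf.tendsto 0).mono_left nhdsWithin_le_nhds
  have h2 : Filter.Tendsto f (nhdsWithin 0 {(0:ℂ)}ᶜ) (nhds 0) := by
    apply Filter.Tendsto.congr' _ tendsto_const_nhds
    filter_upwards [self_mem_nhdsWithin] with z hz
    exact (h z hz).symm
  exact tendsto_nhds_unique h1 h2

lemma differentiable_aeval {M : ℂ → Mat n} (hdiff : Differentiable ℂ M) (r : Polynomial ℂ) :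
    Differentiable ℂ (fun z => aeval (M z) r) := by
  have : (fun z => aeval (M z) r)
      = fun z => ∑ i ∈ Finset.range (r.natDegree + 1), r.coeff i • (M z) ^ i := by
    funext z; rw [Polynomial.aeval_eq_sum_range]
  rw [this]
  apply Differentiable.fun_sum
  intro i _
  exact (hdiff.pow i).const_smul (r.coeff i)

lemma isDiagonalizable_of_squarefree_aeval_eq_zero {B : Mat n} {q : Polynomial ℂ}
    (hq : Squarefree q) (hB : aeval B q = 0) : IsDiagonalizable B := by
  classical
  set e : Mat n ≃ₐ[ℂ] Module.End ℂ (Fin n → ℂ) := Matrix.toLinAlgEquiv'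
  set f : Module.End ℂ (Fin n → ℂ) := e B with hf
  have hfq : aeval f q = 0 := by
    have h := Polynomial.aeval_algHom_apply (e : Mat n →ₐ[ℂ] Module.End ℂ (Fin n → ℂ)) B q
    rw [hB, map_zero] at h
    exact h
  have hss : f.IsSemisimple := Module.End.isSemisimple_of_squarefree_aeval_eq_zero hq hfq
  have htop : ⨆ μ : ℂ, f.eigenspace μ = ⊤ := by
    have h1 := Module.End.iSup_maxGenEigenspace_eq_top f
    have h2 : ∀ μ : ℂ, f.maxGenEigenspace μ = f.eigenspace μ :=
      hss.isFinitelySemisimple.maxGenEigenspace_eq_eigenspace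
    simpa only [h2] using h1
  have hint : DirectSum.IsInternal (fun μ : ℂ => f.eigenspace μ) :=
    DirectSum.isInternal_submodule_of_iSupIndep_of_iSup_eq_top
      (Module.End.eigenspaces_iSupIndep f) htop
  let v : ∀ μ : ℂ, Module.Basis (Fin (Module.finrank ℂ (f.eigenspace μ))) ℂ (f.eigenspace μ) :=
    fun μ => Module.finBasis ℂ _
  let b := hint.collectedBasis v
  let eq := b.indexEquiv (Pi.basisFun ℂ (Fin n))
  let c := b.reindex eq
  let d : Fin n → ℂ := fun i => (eq.symm i).1
  have hc : ∀ i, f (c i) = d i • c i := by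
    intro i
    have hmem : c i ∈ f.eigenspace (d i) := by
      have := hint.collectedBasis_mem v (eq.symm i)
      simpa only [c, Module.Basis.reindex_apply] using this
    exact Module.End.mem_eigenspace_iff.mp hmem
  let P : Mat n := Matrix.of fun i j => c j i
  have hPmat : P = (Pi.basisFun ℂ (Fin n)).toMatrix ⇑c := by
    ext i j
    simp [P, Module.Basis.toMatrix_apply]
  have hP : IsUnit P := by
    have hmul := (Pi.basisFun ℂ (Fin n)).toMatrix_mul_toMatrix_flip c
    have hdet : IsUnit P.det := by
      apply IsUnit.of_mul_eq_one (c.toMatrix ⇑(Pi.basisFun ℂ (Fin n))).det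
      rw [hPmat, ← Matrix.det_mul, hmul, Matrix.det_one]
    exact (Matrix.isUnit_iff_isUnit_det P).mpr hdet
  have hBP : B * P = P * Matrix.diagonal d := by
    ext i j
    have h1 : (B * P) i j = (B.mulVec (c j)) i := by
      simp [Matrix.mul_apply, Matrix.mulVec, dotProduct, P]
    have h2 : B.mulVec (c j) = f (c j) := (Matrix.toLinAlgEquiv'_apply B (c j)).symm
    rw [h1, h2, hc j, Matrix.mul_diagonal]
    simp only [Pi.smul_apply, smul_eq_mul, P, Matrix.of_apply]
    ring
  refine ⟨P, d, hP, ?_⟩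
  have hP' := (Matrix.isUnit_iff_isUnit_det P).mp hP
  calc B = B * P * P⁻¹ := by rw [Matrix.mul_nonsing_inv_cancel_right _ _ hP']
    _ = P * Matrix.diagonal d * P⁻¹ := by rw [hBP]

lemma jc_matrix (A : Mat n) (hA : IsUnit A) :
    ∃ (p q : Polynomial ℂ) (k : ℕ), p.coeff 0 = 0 ∧ Squarefree q ∧ q.coeff 0 ≠ 0 ∧
      aeval (aeval A p) q = 0 ∧ (A - aeval A p) ^ k = 0 := by
  classical
  set e : Mat n ≃ₐ[ℂ] Module.End ℂ (Fin n → ℂ) := Matrix.toLinAlgEquiv' with he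
  set f : Module.End ℂ (Fin n → ℂ) := e A with hf
  have hfA : IsUnit f := hA.map e
  obtain ⟨N, hNmem, s, hsmem, hNnil, hss, hfNs⟩ :=
    Module.End.exists_isNilpotent_isSemisimple (f := f)
  rw [Algebra.adjoin_singleton_eq_range_aeval] at hsmem hNmem
  obtain ⟨p₀, hp₀⟩ := hsmem
  obtain ⟨pN, hpN⟩ := hNmem
  -- the constant coefficient of charpoly is nonzero
  set c₀ : ℂ := (Matrix.charpoly A).coeff 0 with hc₀def
  have hc₀ : c₀ ≠ 0 := by
    intro h
    have hdet := Matrix.det_eq_sign_charpoly_coeff A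
    rw [← hc₀def, h, mul_zero] at hdet
    exact (hA.map (Matrix.detMonoidHom)).ne_zero (by simpa using hdet)
  set p : Polynomial ℂ := p₀ - C (p₀.coeff 0 / c₀) * Matrix.charpoly A with hpdef
  have hp0 : p.coeff 0 = 0 := by
    simp [hpdef, coeff_C_mul, ← hc₀def, div_mul_cancel₀ _ hc₀]
  have hSA : aeval A p = aeval A p₀ := by
    rw [hpdef, map_sub, _root_.map_mul, aeval_C, Matrix.aeval_self_charpoly, mul_zero, sub_zero]
  set S : Mat n := aeval A p with hSdef
  have heS : e S = s := by
    rw [hSA, ← hp₀]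
    exact (Polynomial.aeval_algHom_apply (e : Mat n →ₐ[ℂ] Module.End ℂ (Fin n → ℂ)) A p₀).symm
  -- commutation of N and s
  have hcomm : Commute N s := by
    rw [← hp₀, ← hpN]
    unfold Commute SemiconjBy
    rw [← _root_.map_mul, ← _root_.map_mul, mul_comm]
  -- s is a unit
  obtain ⟨K, hK⟩ := hNnil
  have hsinj : Function.Injective s := by
    rw [← LinearMap.ker_eq_bot, Submodule.eq_bot_iff]
    intro v hv
    rw [LinearMap.mem_ker] at hv
    have key : ∀ j : ℕ, (f ^ j) v = (N ^ j) v := by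
      intro j
      induction j with
      | zero => simp
      | succ j ih =>
          have h1 : s ((N ^ j) v) = (N ^ j) (s v) := by
            have := (hcomm.symm.pow_right j)
            calc s ((N ^ j) v) = (s * N ^ j) v := rfl
              _ = (N ^ j * s) v := by rw [this]
              _ = (N ^ j) (s v) := rfl
          rw [pow_succ', Module.End.mul_apply, ih, hfNs, LinearMap.add_apply, h1, hv,
            map_zero, add_zero, ← Module.End.mul_apply, ← pow_succ']
    have hfK : (f ^ K) v = 0 := by rw [key K, hK]; rfl
    have : Function.Injective (f ^ K) := ((Module.End.isUnit_iff _).mp (hfA.pow K)).injective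
    apply this
    rw [hfK, map_zero]
  have hsunit : IsUnit s := by
    rw [Module.End.isUnit_iff]
    exact ⟨hsinj, (LinearMap.injective_iff_surjective).mp hsinj⟩
  -- q := minpoly of s
  set q : Polynomial ℂ := minpoly ℂ s with hqdef
  have hq0 : q ≠ 0 := minpoly.ne_zero_of_finite ℂ s
  have hqsf : Squarefree q := hss.minpoly_squarefree
  have haevalq : aeval S q = 0 := by
    apply e.injective
    have h := Polynomial.aeval_algHom_apply (e : Mat n →ₐ[ℂ] Module.End ℂ (Fin n → ℂ)) S q
    rw [show ((e : Mat n →ₐ[ℂ] Module.End ℂ (Fin n → ℂ)) S) = s from heS] at h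
    rw [map_zero]
    exact h.symm.trans (minpoly.aeval ℂ s)
  have hqc0 : q.coeff 0 ≠ 0 := by
    intro h
    have hXdvd : X ∣ q := Polynomial.X_dvd_iff.mpr h
    obtain ⟨r, hr⟩ := hXdvd
    have hr0 : r ≠ 0 := by rintro rfl; rw [mul_zero] at hr; exact hq0 hr
    have haer : aeval s r = 0 := by
      have h0 : aeval s q = 0 := minpoly.aeval ℂ s
      rw [hr, _root_.map_mul, aeval_X] at h0
      exact hsunit.mul_right_eq_zero.mp h0
    have hdvd : q ∣ r := minpoly.dvd ℂ s haer
    have hle : q.natDegree ≤ r.natDegree := Polynomial.natDegree_le_of_dvd hdvd hr0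
    have : q.natDegree = 1 + r.natDegree := by
      rw [hr, Polynomial.natDegree_mul (X_ne_zero) hr0, Polynomial.natDegree_X]
    omega
  refine ⟨p, q, K, hp0, hqsf, hqc0, haevalq, ?_⟩
  apply e.injective
  rw [map_pow, map_sub, heS, ← hf, hfNs, add_sub_cancel_right, hK, map_zero]
end JCAux

/-- If `M : ℂ → GL_n(ℂ)` is holomorphic and the matrices `M(z)`, `z ≠ 0`, are
pairwise conjugate, then there is a single polynomial `p` with `p(0) = 0` such
that `M_s(z) = p(M(z))` is the semisimple part of `M(z)` for every `z` (including
`z = 0`); in particular `M_s` and `M_u = M_s⁻¹ M` are holomorphic on all of `ℂ`. -/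
theorem semisimple_part_holomorphic {n : ℕ} (M : ℂ → Mat n)
    (hdiff : Differentiable ℂ M)
    (hunit : ∀ z : ℂ, IsUnit (M z))
    (hconj : ∀ z w : ℂ, z ≠ 0 → w ≠ 0 →
      ∃ g : Mat n, IsUnit g ∧ M z = g * M w * g⁻¹) :
    ∃ p : Polynomial ℂ, p.coeff 0 = 0 ∧
      (∀ z : ℂ,
        IsDiagonalizable (aeval (M z) p) ∧ IsUnit (aeval (M z) p) ∧
        Commute (aeval (M z) p) (M z) ∧
        IsNilpotent ((aeval (M z) p)⁻¹ * M z - 1)) ∧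
      Differentiable ℂ (fun z => aeval (M z) p) ∧
      Differentiable ℂ (fun z => (aeval (M z) p)⁻¹ * M z) := by
  classical
  obtain ⟨p, q, k, hp0, hqsf, hqc0, hSq, hNk⟩ := JCAux.jc_matrix (M 1) (hunit 1)
  set A : Mat n := M 1 with hAdef
  set c : ℂ := q.coeff 0 with hcdef
  set ip : Polynomial ℂ := (-(c⁻¹)) • ((q.divX).comp p) with hip
  -- universal inverse formula
  have hinv : ∀ B : Mat n, aeval (aeval B p) q = 0 → aeval B p * aeval B ip = 1 := by
    intro B hB
    have h2 := congrArg (aeval (aeval B p)) (Polynomial.X_mul_divX_add q)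
    rw [map_add, _root_.map_mul, aeval_X, aeval_C, hB, ← hcdef] at h2
    have h4 : aeval B p * aeval (aeval B p) q.divX = -(algebraMap ℂ (Mat n) c) :=
      eq_neg_of_add_eq_zero_left h2
    have h3 : aeval B ip = (-(c⁻¹)) • aeval (aeval B p) q.divX := by
      rw [hip, _root_.map_smul, Polynomial.aeval_comp]
    rw [h3, mul_smul_comm, h4, neg_smul, smul_neg, neg_neg,
      Algebra.algebraMap_eq_smul_one, smul_smul, inv_mul_cancel₀ hqc0, one_smul]
  -- `q ∘ p` annihilates `M z` for all `z`
  have hAq : aeval A (q.comp p) = 0 := by rw [Polynomial.aeval_comp]; exact hSq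
  have hq_ne : ∀ z : ℂ, z ≠ 0 → aeval (M z) (q.comp p) = 0 := by
    intro z hz
    obtain ⟨g, hg, hMz⟩ := hconj z 1 hz one_ne_zero
    rw [hMz, JCAux.aeval_conj _ hg, ← hAdef, hAq, Matrix.mul_zero, Matrix.zero_mul]
  have hq_all : ∀ z : ℂ, aeval (M z) (q.comp p) = 0 := by
    intro z
    rcases eq_or_ne z 0 with rfl | hz
    · exact JCAux.eq_zero_at_zero_of_continuous
        ((JCAux.differentiable_aeval hdiff (q.comp p)).continuous) hq_ne
    · exact hq_ne z hz
  have hSq_all : ∀ z : ℂ, aeval (aeval (M z) p) q = 0 := by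
    intro z; rw [← Polynomial.aeval_comp]; exact hq_all z
  have hinv_all : ∀ z : ℂ, aeval (M z) p * aeval (M z) ip = 1 :=
    fun z => hinv (M z) (hSq_all z)
  have hinv_all' : ∀ z : ℂ, aeval (M z) ip * aeval (M z) p = 1 :=
    fun z => (JCAux.commute_aeval (M z) ip p).trans (hinv_all z)
  have hunit_all : ∀ z : ℂ, IsUnit (aeval (M z) p) :=
    fun z => ⟨⟨aeval (M z) p, aeval (M z) ip, hinv_all z, hinv_all' z⟩, rfl⟩
  have hinv_eq : ∀ z : ℂ, (aeval (M z) p)⁻¹ = aeval (M z) ip :=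
    fun z => Matrix.inv_eq_right_inv (hinv_all z)
  -- nilpotency at the base point
  have hnilA : (aeval A ip * A - 1) ^ k = 0 := by
    have h1 : aeval A ip * aeval A p = 1 := hinv_all' 1
    have h2 : aeval A ip * A - 1 = aeval A ip * (A - aeval A p) := by
      rw [Matrix.mul_sub, h1]
    have h3 : Commute (aeval A ip) (A - aeval A p) := by
      have := JCAux.commute_aeval A ip (X - p)
      rwa [map_sub, aeval_X] at this
    rw [h2, h3.mul_pow, hNk, Matrix.mul_zero]
  have hnil_ne : ∀ z : ℂ, z ≠ 0 → (aeval (M z) ip * M z - 1) ^ k = 0 := by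
    intro z hz
    obtain ⟨g, hg, hMz⟩ := hconj z 1 hz one_ne_zero
    have hg' := (Matrix.isUnit_iff_isUnit_det g).mp hg
    have hg1 : g⁻¹ * g = 1 := Matrix.nonsing_inv_mul g hg'
    have hg2 : g * g⁻¹ = 1 := Matrix.mul_nonsing_inv g hg'
    rw [← hAdef] at hMz
    have h5 : aeval (M z) ip * M z - 1 = g * (aeval A ip * A - 1) * g⁻¹ := by
      rw [hMz, JCAux.aeval_conj _ hg]
      calc g * aeval A ip * g⁻¹ * (g * A * g⁻¹) - 1
          = g * aeval A ip * (g⁻¹ * g) * A * g⁻¹ - 1 := by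
            simp only [Matrix.mul_assoc]
        _ = g * (aeval A ip * A) * g⁻¹ - g * 1 * g⁻¹ := by
            rw [hg1]; simp only [Matrix.mul_one, Matrix.mul_assoc, hg2]
        _ = g * (aeval A ip * A - 1) * g⁻¹ := by
            rw [Matrix.mul_sub, Matrix.sub_mul, Matrix.mul_one]
    rw [h5, JCAux.conj_pow hg1 hg2, hnilA, Matrix.mul_zero, Matrix.zero_mul]
  have hnil_all : ∀ z : ℂ, (aeval (M z) ip * M z - 1) ^ k = 0 := by
    intro z
    rcases eq_or_ne z 0 with rfl | hz
    · refine JCAux.eq_zero_at_zero_of_continuous ?_ hnil_ne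
      have hd : Differentiable ℂ (fun z => (aeval (M z) ip * M z - 1) ^ k) :=
        (((JCAux.differentiable_aeval hdiff ip).mul hdiff).sub_const 1).pow k
      exact hd.continuous
    · exact hnil_ne z hz
  refine ⟨p, hp0, fun z => ⟨?_, hunit_all z, ?_, ?_⟩,
    JCAux.differentiable_aeval hdiff p, ?_⟩
  · exact JCAux.isDiagonalizable_of_squarefree_aeval_eq_zero hqsf (hSq_all z)
  · have := JCAux.commute_aeval (M z) p X
    rwa [aeval_X] at this
  · rw [hinv_eq z]
    exact ⟨k, hnil_all z⟩
  · have heq : (fun z => (aeval (M z) p)⁻¹ * M z) = fun z => aeval (M z) ip * M z :=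
      funext fun z => by rw [hinv_eq z]
    rw [heq]
    exact (JCAux.differentiable_aeval hdiff ip).mul hdiff
end
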